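/- The function $f(r) = \frac{r}{r_0\sqrt{\pi D t}} \exp\left(-\frac{r^2+r_0^2}{4Dt}\right)\sinh\left(\frac{r_0 r}{2Dt}\right)$ defined for $r \geq 0$ (with $D, t, r_0 > 0$) is a valid probability density: it is nonnegative and integrates to 1 over $[0,\infty)$. -/

import Mathlib

open MeasureTheory Real Set

lemma gauss_odd (b : ℝ) : ∫ x : ℝ, x * Real.exp (-b * x ^ 2) = 0 := by
  have h := integral_neg_eq_self (fun x : ℝ => x * Real.exp (-b * x ^ 2)) volume
  simp only [neg_mul, neg_sq] at h
  have h' : ∫ x : ℝ, -(x * Real.exp (-b * x ^ 2)) = ∫ x : ℝ, x * Real.exp (-b * x ^ 2) := by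
    simpa [neg_mul] using h
  rw [integral_neg] at h'
  linarith

lemma gauss_shift_integrable {b : ℝ} (hb : 0 < b) (c : ℝ) :
    Integrable (fun x : ℝ => x * Real.exp (-b * (x - c) ^ 2)) := by
  have h := ((integrable_mul_exp_neg_mul_sq hb).add
    ((integrable_exp_neg_mul_sq hb).const_mul c)).comp_sub_right c
  exact h.congr (Filter.Eventually.of_forall fun x => by simp only [Pi.add_apply]; ring)

lemma gauss_shift_integral {b : ℝ} (hb : 0 < b) (c : ℝ) :
    ∫ x : ℝ, x * Real.exp (-b * (x - c) ^ 2) = c * Real.sqrt (π / b) := by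
  have h := integral_add_right_eq_self (μ := volume)
    (fun x : ℝ => x * Real.exp (-b * (x - c) ^ 2)) c
  simp only [add_sub_cancel_right] at h
  rw [← h]
  have heq : ∀ x : ℝ, (x + c) * Real.exp (-b * x ^ 2)
      = x * Real.exp (-b * x ^ 2) + c * Real.exp (-b * x ^ 2) := fun x => by ring
  simp_rw [heq]
  rw [integral_add (integrable_mul_exp_neg_mul_sq hb)
    ((integrable_exp_neg_mul_sq hb).const_mul c), gauss_odd, integral_const_mul, integral_gaussian, zero_add]

/-- The function `f(r) = r/(r0 √(π D t)) exp(-(r²+r0²)/(4Dt)) sinh(r0 r/(2Dt))`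
(for `D, t, r0 > 0`) is a valid probability density on `[0, ∞)`: it is
nonnegative there and integrates to 1. -/
theorem stmt_2 (D t r0 : ℝ) (hD : 0 < D) (ht : 0 < t) (hr0 : 0 < r0) :
    (∀ r : ℝ, 0 ≤ r →
      0 ≤ r / (r0 * Real.sqrt (π * D * t)) * Real.exp (-(r ^ 2 + r0 ^ 2) / (4 * D * t)) *
          Real.sinh (r0 * r / (2 * D * t))) ∧
    ∫ r in Ioi (0 : ℝ),
        r / (r0 * Real.sqrt (π * D * t)) * Real.exp (-(r ^ 2 + r0 ^ 2) / (4 * D * t)) *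
          Real.sinh (r0 * r / (2 * D * t)) = 1 := by
  have hπDt : 0 < π * D * t := by positivity
  have hK : 0 < r0 * Real.sqrt (π * D * t) := by positivity
  set F : ℝ → ℝ := fun r =>
    r / (r0 * Real.sqrt (π * D * t)) * Real.exp (-(r ^ 2 + r0 ^ 2) / (4 * D * t)) *
      Real.sinh (r0 * r / (2 * D * t)) with hF
  constructor
  · intro r hr
    apply mul_nonneg (mul_nonneg (div_nonneg hr hK.le) (Real.exp_pos _).le)
    exact Real.sinh_nonneg_iff.mpr (by positivity)
  -- the integral part
  set b : ℝ := (4 * D * t)⁻¹ with hb_def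
  have hb : 0 < b := by positivity
  have h4 : (4 * D * t) ≠ 0 := by positivity
  have h2' : (2 * D * t) ≠ 0 := by positivity
  -- key pointwise identity
  have key : ∀ r : ℝ, F r = (2 * (r0 * Real.sqrt (π * D * t)))⁻¹ *
      (r * Real.exp (-b * (r - r0) ^ 2) - r * Real.exp (-b * (r - -r0) ^ 2)) := by
    intro r
    have e1 : -(r ^ 2 + r0 ^ 2) / (4 * D * t) + r0 * r / (2 * D * t)
        = -b * (r - r0) ^ 2 := by
      rw [hb_def]; field_simp; ring
    have e2 : -(r ^ 2 + r0 ^ 2) / (4 * D * t) - r0 * r / (2 * D * t)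
        = -b * (r - -r0) ^ 2 := by
      rw [hb_def]; field_simp; ring
    rw [hF]
    show r / (r0 * Real.sqrt (π * D * t)) * Real.exp (-(r ^ 2 + r0 ^ 2) / (4 * D * t)) *
      Real.sinh (r0 * r / (2 * D * t)) = _
    rw [Real.sinh_eq, ← e1, ← e2, Real.exp_add, Real.exp_sub, Real.exp_neg, eq_comm,
      inv_eq_one_div, mul_comm (2 : ℝ)]
    have hKne : r0 * Real.sqrt (π * D * t) ≠ 0 := ne_of_gt hK
    have hEne : Real.exp (r0 * r / (2 * D * t)) ≠ 0 := Real.exp_ne_zero _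
    field_simp
  -- evenness
  have habs : ∀ x : ℝ, F |x| = F x := by
    intro x
    rcases le_or_gt 0 x with hx | hx
    · rw [abs_of_nonneg hx]
    · rw [abs_of_neg hx, hF]
      show (-x) / _ * Real.exp (-((-x) ^ 2 + r0 ^ 2) / _) * Real.sinh (r0 * -x / _) = _
      simp only [neg_sq, mul_neg, neg_div, Real.sinh_neg, neg_mul, neg_neg]
  have hIoi : (2 : ℝ) * ∫ x in Ioi (0 : ℝ), F x = ∫ x : ℝ, F x := by
    rw [← integral_comp_abs (f := F)]
    simp_rw [habs]
  -- value of the full-line integral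
  have hfull : ∫ x : ℝ, F x = (2 * (r0 * Real.sqrt (π * D * t)))⁻¹ *
      (r0 * Real.sqrt (π / b) - (-r0) * Real.sqrt (π / b)) := by
    simp_rw [key]
    rw [integral_const_mul,
      integral_sub (gauss_shift_integrable hb r0) (gauss_shift_integrable hb (-r0)),
      gauss_shift_integral hb r0, gauss_shift_integral hb (-r0)]
  have hsqrt : Real.sqrt (π / b) = 2 * Real.sqrt (π * D * t) := by
    rw [hb_def, div_eq_mul_inv, inv_inv]
    have : π * (4 * D * t) = 2 ^ 2 * (π * D * t) := by ring
    rw [this, Real.sqrt_mul (by norm_num) _, Real.sqrt_sq (by norm_num : (0:ℝ) ≤ 2)]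
  have hS : 0 < Real.sqrt (π * D * t) := Real.sqrt_pos.mpr hπDt
  rw [hfull, hsqrt] at hIoi
  have : (2 : ℝ) * ∫ x in Ioi (0 : ℝ), F x = 2 := by
    rw [hIoi]; field_simp; ring
  linarith
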